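/- Let N ≥ 1 and let k, l, n be reals with |k| < N and |l±n| ≤ N±k (so that l/N is a convex combination of (l+n)/(N+k) and (l-n)/(N-k) with weights (N+k)/(2N) and (N-k)/(2N)). Then N·[((N+k)/(2N))·I((l+n)/(N+k)) + ((N-k)/(2N))·I((l-n)/(N-k)) - I(l/N)] ≥ (1/2)·(Nn - lk)²/(N(N² - k²)). -/

import Mathlib

noncomputable def rateI (x : ℝ) : ℝ :=
  (1 - x) / 2 * Real.log (1 - x) + (1 + x) / 2 * Real.log (1 + x)

open Real Set

/-- `J x = rateI x - x²/2`. -/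
noncomputable def rateJ (x : ℝ) : ℝ := rateI x - x ^ 2 / 2

/-- first derivative of `rateJ` on the open interval -/
noncomputable def rateJ' (x : ℝ) : ℝ := (Real.log (1 + x) - Real.log (1 - x)) / 2 - x

lemma rateJ_continuous : Continuous rateJ := by
  have h : Continuous fun y : ℝ => y * Real.log y := Real.continuous_mul_log
  have h1 : Continuous fun x : ℝ => (1 - x) * Real.log (1 - x) :=
    h.comp (continuous_const.sub continuous_id)
  have h2 : Continuous fun x : ℝ => (1 + x) * Real.log (1 + x) :=
    h.comp (continuous_const.add continuous_id)
  have : rateJ = fun x => ((1 - x) * Real.log (1 - x)) / 2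
      + ((1 + x) * Real.log (1 + x)) / 2 - x ^ 2 / 2 := by
    funext x; unfold rateJ rateI; ring
  rw [this]
  exact (((h1.div_const 2).add (h2.div_const 2)).sub
    ((continuous_pow 2).div_const 2))

lemma hasDerivAt_rateJ {x : ℝ} (hx : x ∈ Ioo (-1 : ℝ) 1) :
    HasDerivAt rateJ (rateJ' x) x := by
  have h1x : (0 : ℝ) < 1 - x := by linarith [hx.2]
  have h2x : (0 : ℝ) < 1 + x := by linarith [hx.1]
  have hl1 : HasDerivAt (fun x : ℝ => Real.log (1 - x)) (-(1 - x)⁻¹) x := by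
    have := (Real.hasDerivAt_log (ne_of_gt h1x)).comp x
      ((hasDerivAt_id x).const_sub 1)
    simpa [Function.comp_def] using this
  have hl2 : HasDerivAt (fun x : ℝ => Real.log (1 + x)) ((1 + x)⁻¹) x := by
    have := (Real.hasDerivAt_log (ne_of_gt h2x)).comp x
      ((hasDerivAt_id x).const_add 1)
    simpa [Function.comp_def] using this
  have hu1 : HasDerivAt (fun x : ℝ => (1 - x) / 2) (-(1 / 2)) x := by
    have := ((hasDerivAt_id x).const_sub 1).div_const 2
    simpa [neg_div] using this
  have hu2 : HasDerivAt (fun x : ℝ => (1 + x) / 2) (1 / 2) x := by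
    have := ((hasDerivAt_id x).const_add 1).div_const 2
    simpa using this
  have hx2 : HasDerivAt (fun x : ℝ => x ^ 2 / 2) x x := by
    have := (hasDerivAt_pow 2 x).div_const 2
    simpa using this
  have h := ((hu1.mul hl1).add (hu2.mul hl2)).sub hx2
  have heq : -(1 / 2) * Real.log (1 - x) + (1 - x) / 2 * -(1 - x)⁻¹
      + (1 / 2 * Real.log (1 + x) + (1 + x) / 2 * (1 + x)⁻¹) - x = rateJ' x := by
    unfold rateJ'
    field_simp
    ring
  rw [heq] at h
  exact h

lemma hasDerivAt_rateJ' {x : ℝ} (hx : x ∈ Ioo (-1 : ℝ) 1) :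
    HasDerivAt rateJ' (((1 + x)⁻¹ + (1 - x)⁻¹) / 2 - 1) x := by
  have h1x : (0 : ℝ) < 1 - x := by linarith [hx.2]
  have h2x : (0 : ℝ) < 1 + x := by linarith [hx.1]
  have hl1 : HasDerivAt (fun x : ℝ => Real.log (1 - x)) (-(1 - x)⁻¹) x := by
    have := (Real.hasDerivAt_log (ne_of_gt h1x)).comp x
      ((hasDerivAt_id x).const_sub 1)
    simpa [Function.comp_def] using this
  have hl2 : HasDerivAt (fun x : ℝ => Real.log (1 + x)) ((1 + x)⁻¹) x := by
    have := (Real.hasDerivAt_log (ne_of_gt h2x)).comp x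
      ((hasDerivAt_id x).const_add 1)
    simpa [Function.comp_def] using this
  have h := ((hl2.sub hl1).div_const 2).sub (hasDerivAt_id x)
  have heq : ((1 + x)⁻¹ - -(1 - x)⁻¹) / 2 - 1 = ((1 + x)⁻¹ + (1 - x)⁻¹) / 2 - 1 := by
    ring
  rw [heq] at h
  exact h

lemma rateJ_convexOn : ConvexOn ℝ (Icc (-1 : ℝ) 1) rateJ := by
  have hder : ∀ x ∈ Ioo (-1 : ℝ) 1, deriv rateJ x = rateJ' x := fun x hx =>
    (hasDerivAt_rateJ hx).deriv
  apply convexOn_of_deriv2_nonneg (convex_Icc _ _) rateJ_continuous.continuousOn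
  · rw [interior_Icc]
    exact fun x hx => (hasDerivAt_rateJ hx).differentiableAt.differentiableWithinAt
  · rw [interior_Icc]
    exact fun x hx => ((hasDerivAt_rateJ' hx).differentiableAt.differentiableWithinAt).congr
      hder (hder x hx)
  · rw [interior_Icc]
    intro x hx
    have h1x : (0 : ℝ) < 1 - x := by linarith [hx.2]
    have h2x : (0 : ℝ) < 1 + x := by linarith [hx.1]
    have heq : deriv (deriv rateJ) x = ((1 + x)⁻¹ + (1 - x)⁻¹) / 2 - 1 := by
      have hev : deriv rateJ =ᶠ[nhds x] rateJ' :=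
        Filter.eventually_of_mem (isOpen_Ioo.mem_nhds hx) hder
      rw [hev.deriv_eq]
      exact (hasDerivAt_rateJ' hx).deriv
    show 0 ≤ deriv^[2] rateJ x
    simp only [Function.iterate_succ, Function.iterate_zero, Function.comp_apply, Function.id_def]
    rw [heq]
    have huv : (1 + x)⁻¹ * (1 - x)⁻¹ * ((1 + x) * (1 - x)) = 1 := by
      field_simp
    have hsum : (1 + x)⁻¹ + (1 - x)⁻¹ = 2 * ((1 + x)⁻¹ * (1 - x)⁻¹) := by
      field_simp
      ring
    nlinarith [mul_nonneg (mul_pos (inv_pos.mpr h2x) (inv_pos.mpr h1x)).le (sq_nonneg x)]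

/-- Convexity excess bound for `I`: if `|k| < N`, `|l+n| ≤ N+k` and `|l-n| ≤ N-k`, then
`N[((N+k)/2N) I((l+n)/(N+k)) + ((N-k)/2N) I((l-n)/(N-k)) - I(l/N)]
  ≥ (1/2)(Nn - lk)²/(N(N² - k²))`. -/
theorem rateI_convexity_excess (N k l n : ℝ) (hN : 1 ≤ N) (hk : |k| < N)
    (h1 : |l + n| ≤ N + k) (h2 : |l - n| ≤ N - k) :
    (N : ℝ) * ((N + k) / (2 * N) * rateI ((l + n) / (N + k))
        + (N - k) / (2 * N) * rateI ((l - n) / (N - k)) - rateI (l / N))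
      ≥ 1 / 2 * (N * n - l * k) ^ 2 / (N * (N ^ 2 - k ^ 2)) := by
  have hN0 : (0 : ℝ) < N := by linarith
  obtain ⟨hk1, hk2⟩ := abs_lt.mp hk
  have hNk1 : (0 : ℝ) < N + k := by linarith
  have hNk2 : (0 : ℝ) < N - k := by linarith
  set a := (l + n) / (N + k) with ha_def
  set b := (l - n) / (N - k) with hb_def
  have ha : a ∈ Icc (-1 : ℝ) 1 := by
    rw [Set.mem_Icc, ← abs_le, ha_def, abs_div, abs_of_pos hNk1, div_le_one hNk1]
    exact h1
  have hb : b ∈ Icc (-1 : ℝ) 1 := by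
    rw [Set.mem_Icc, ← abs_le, hb_def, abs_div, abs_of_pos hNk2, div_le_one hNk2]
    exact h2
  set p := (N + k) / (2 * N) with hp_def
  set q := (N - k) / (2 * N) with hq_def
  have hp : 0 ≤ p := le_of_lt (div_pos hNk1 (by linarith))
  have hq : 0 ≤ q := le_of_lt (div_pos hNk2 (by linarith))
  have hpq : p + q = 1 := by
    rw [hp_def, hq_def, ← add_div, div_eq_one_iff_eq (by positivity)]
    ring
  have hcomb : p * a + q * b = l / N := by
    rw [hp_def, hq_def, ha_def, hb_def]
    field_simp
    ring
  have hconv := rateJ_convexOn.2 ha hb hp hq hpq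
  simp only [smul_eq_mul] at hconv
  rw [hcomb] at hconv
  unfold rateJ at hconv
  -- hconv : rateI (l/N) - (l/N)^2/2 ≤ p*(rateI a - a^2/2) + q*(rateI b - b^2/2)
  have key : N * (p * (a ^ 2 / 2) + q * (b ^ 2 / 2) - (l / N) ^ 2 / 2)
      = 1 / 2 * (N * n - l * k) ^ 2 / (N * (N ^ 2 - k ^ 2)) := by
    rw [hp_def, hq_def, ha_def, hb_def]
    have hne : N ^ 2 - k ^ 2 ≠ 0 := by nlinarith
    field_simp
    ring
  have hmul := mul_le_mul_of_nonneg_left hconv hN0.le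
  calc 1 / 2 * (N * n - l * k) ^ 2 / (N * (N ^ 2 - k ^ 2))
      = N * (p * (a ^ 2 / 2) + q * (b ^ 2 / 2) - (l / N) ^ 2 / 2) := key.symm
    _ ≤ N * (p * rateI a + q * rateI b - rateI (l / N)) := by nlinarith [hmul]
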